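/- Let $\mathbb{K}$ be a number field and let $\beta_1, \ldots, \beta_s \in \mathbb{K}$ be such that none of them is zero or a root of unity. Then there is a constant $C > 0$ depending only on $\beta_1, \ldots, \beta_s$ such that, for all $x \geq 1$, the number of primes $p \leq x$ for which some $\beta_i$ has multiplicative order less than $p^{1/4}$ modulo some prime ideal of $\mathcal{O}_\mathbb{K}$ lying above $p$ is at most $C x^{1/2}$. -/

import Mathlib

open IsDedekindDomain NumberField

/-- **Lemma (`lem:ponequarter`, Corvaja–Zannier).**
Let `β₁, …, β_s` be elements of a number field `K`, none of which is zero or a root of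
unity. Then the number of primes `p ≤ x` such that some `β i` has multiplicative order
less than `p^(1/4)` modulo some prime ideal of `𝓞 K` lying above `p` is `O(x^(1/2))`,
where the implied constant depends only on `β₁, …, β_s`. Here "`β` has order less than
`B` modulo the prime `v`" is expressed as: there is `0 < m < B` with `β^m ≡ 1` modulo
`v`, i.e. the `v`-adic valuation of `β^m - 1` is `< 1`. -/

lemma norm_growth (K : Type) [Field K] [NumberField K] (u d : 𝓞 K) :
    ∃ k : ℕ, ∀ m : ℕ, 0 < m →
      ((Algebra.norm ℤ (u ^ m - d ^ m)).natAbs : ℕ) ≤ 2 ^ (k * m) := by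
  set U : K := algebraMap (𝓞 K) K u with hU
  set D : K := algebraMap (𝓞 K) K d with hD
  set B : InfinitePlace K → ℝ := fun w => 2 * max (w U) (max (w D) 1) with hB
  have hB2 : ∀ w : InfinitePlace K, (2:ℝ) ≤ B w := by
    intro w
    have h : (1:ℝ) ≤ max (w U) (max (w D) 1) :=
      le_max_of_le_right (le_max_right _ _)
    simp only [hB]
    nlinarith
  set A : ℝ := ∏ w : InfinitePlace K, B w ^ (w.mult) with hA
  have hA1 : (1:ℝ) ≤ A := by
    rw [hA]
    calc (1:ℝ) = ∏ _w : InfinitePlace K, 1 := by simp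
    _ ≤ ∏ w : InfinitePlace K, B w ^ w.mult :=
      Finset.prod_le_prod (by intros; norm_num)
        (fun w _ => one_le_pow₀ (by linarith [hB2 w]))
  set k : ℕ := Nat.clog 2 ⌈A⌉₊ with hk
  have hA2k : A ≤ (2:ℝ) ^ k := by
    calc A ≤ (⌈A⌉₊ : ℝ) := Nat.le_ceil A
    _ ≤ ((2 ^ k : ℕ) : ℝ) := by
        exact_mod_cast Nat.le_pow_clog one_lt_two _
    _ = (2:ℝ) ^ k := by push_cast; ring
  refine ⟨k, fun m hm => ?_⟩
  have key : ((Algebra.norm ℤ (u ^ m - d ^ m)).natAbs : ℝ) ≤ A ^ m := by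
    have h1 : ((Algebra.norm ℤ (u ^ m - d ^ m)).natAbs : ℝ)
        = |(Algebra.norm ℚ (algebraMap (𝓞 K) K (u ^ m - d ^ m)) : ℚ)| := by
      rw [Nat.cast_natAbs, Int.cast_abs, ← Rat.cast_intCast,
        Algebra.coe_norm_int, ← Rat.cast_abs]
    have h2 := NumberField.InfinitePlace.prod_eq_abs_norm
      (algebraMap (𝓞 K) K (u ^ m - d ^ m))
    rw [h1, ← h2]
    push_cast
    have hbound : ∀ w : InfinitePlace K,
        (w (algebraMap (𝓞 K) K (u ^ m - d ^ m)) : ℝ) ^ w.mult ≤ (B w ^ m) ^ w.mult := by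
      intro w
      apply pow_le_pow_left₀ (apply_nonneg w _)
      have hsub : w (algebraMap (𝓞 K) K (u ^ m - d ^ m)) ≤ w U ^ m + w D ^ m := by
        have : algebraMap (𝓞 K) K (u ^ m - d ^ m) = U ^ m - D ^ m := by
          simp [hU, hD, map_sub, map_pow]
        rw [this]
        calc w (U ^ m - D ^ m) ≤ w (U ^ m) + w (D ^ m) := w.1.sub_le_add _ _
        _ = w U ^ m + w D ^ m := by rw [map_pow, map_pow]
      have hM : (1:ℝ) ≤ max (w U) (max (w D) 1) := le_max_of_le_right (le_max_right _ _)
      have hU' : w U ^ m ≤ max (w U) (max (w D) 1) ^ m :=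
        pow_le_pow_left₀ (apply_nonneg w _) (le_max_left _ _) m
      have hD' : w D ^ m ≤ max (w U) (max (w D) 1) ^ m :=
        pow_le_pow_left₀ (apply_nonneg w _) (le_max_of_le_right (le_max_left _ _)) m
      have h2m : (2:ℝ) ≤ 2 ^ m := by
        calc (2:ℝ) = 2 ^ 1 := (pow_one 2).symm
        _ ≤ 2 ^ m := pow_le_pow_right₀ one_le_two hm
      calc w (algebraMap (𝓞 K) K (u ^ m - d ^ m)) ≤ w U ^ m + w D ^ m := hsub
      _ ≤ 2 * max (w U) (max (w D) 1) ^ m := by linarith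
      _ ≤ 2 ^ m * max (w U) (max (w D) 1) ^ m := by
          have := pow_pos (lt_of_lt_of_le one_pos hM) m
          nlinarith
      _ = B w ^ m := by rw [hB]; rw [mul_pow]
    calc ∏ w : InfinitePlace K, (w (algebraMap (𝓞 K) K (u ^ m - d ^ m)) : ℝ) ^ w.mult
        ≤ ∏ w : InfinitePlace K, (B w ^ m) ^ w.mult :=
          Finset.prod_le_prod (fun w _ => pow_nonneg (apply_nonneg w _) _)
            (fun w _ => hbound w)
    _ = A ^ m := by
        rw [hA, ← Finset.prod_pow]
        congr 1
        ext w
        ring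
  have : ((Algebra.norm ℤ (u ^ m - d ^ m)).natAbs : ℝ) ≤ ((2 ^ (k * m) : ℕ) : ℝ) := by
    calc ((Algebra.norm ℤ (u ^ m - d ^ m)).natAbs : ℝ) ≤ A ^ m := key
    _ ≤ ((2:ℝ) ^ k) ^ m := pow_le_pow_left₀ (by linarith) hA2k m
    _ = ((2 ^ (k * m) : ℕ) : ℝ) := by push_cast; rw [← pow_mul]
  exact_mod_cast this

lemma key_lemma (K : Type) [Field K] [NumberField K] (b : K) (hb0 : b ≠ 0)
    (hbru : ∀ n : ℕ, 0 < n → b ^ n ≠ 1) :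
    ∃ k : ℕ, ∀ m : ℕ, 0 < m → ∃ N : ℕ, N ≠ 0 ∧ N.primeFactors.card ≤ k * m ∧
      ∀ (p : ℕ) (v : HeightOneSpectrum (𝓞 K)), p.Prime → (p : 𝓞 K) ∈ v.asIdeal →
        v.valuation K (b ^ m - 1) < 1 → p ∣ N := by
  obtain ⟨dd, u, hu⟩ := IsLocalization.exists_integer_multiple (nonZeroDivisors (𝓞 K)) b
  set d : 𝓞 K := (dd : 𝓞 K) with hdset
  have hd0 : d ≠ 0 := nonZeroDivisors.coe_ne_zero dd
  have hdK : algebraMap (𝓞 K) K d ≠ 0 := by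
    simpa using (map_ne_zero_iff _ (FaithfulSMul.algebraMap_injective (𝓞 K) K)).mpr hd0
  have hu' : algebraMap (𝓞 K) K u = algebraMap (𝓞 K) K d * b := by
    rw [hu, Algebra.smul_def]
  obtain ⟨k, hk⟩ := norm_growth K u d
  refine ⟨k, fun m hm => ?_⟩
  set a : 𝓞 K := u ^ m - d ^ m with ha
  have haK : algebraMap (𝓞 K) K a = (algebraMap (𝓞 K) K d) ^ m * (b ^ m - 1) := by
    rw [ha, map_sub, map_pow, map_pow, hu', mul_pow]; ring
  have ha0 : a ≠ 0 := by
    intro h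
    have h0 : algebraMap (𝓞 K) K a = 0 := by rw [h, map_zero]
    rw [haK] at h0
    rcases mul_eq_zero.mp h0 with h1 | h1
    · exact hdK (pow_eq_zero_iff hm.ne' |>.mp h1)
    · exact hbru m hm (sub_eq_zero.mp h1)
  set N : ℕ := (Algebra.norm ℤ a).natAbs with hN
  have hNabs : N = Ideal.absNorm (Ideal.span {a}) := (Ideal.absNorm_span_singleton a).symm
  have hN0 : N ≠ 0 := by
    rw [hNabs]
    intro h
    rw [Ideal.absNorm_eq_zero_iff, Ideal.span_singleton_eq_bot] at h
    exact ha0 h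
  refine ⟨N, hN0, ?_, ?_⟩
  · have h2 : 2 ^ N.primeFactors.card ≤ N := by
      calc 2 ^ N.primeFactors.card ≤ ∏ p ∈ N.primeFactors, p :=
        Finset.pow_card_le_prod _ _ _ (fun p hp => (Nat.prime_of_mem_primeFactors hp).two_le)
      _ ≤ N := Nat.le_of_dvd (Nat.pos_of_ne_zero hN0) (Nat.prod_primeFactors_dvd N)
    have := le_trans h2 (hk m hm)
    exact (Nat.pow_le_pow_iff_right one_lt_two).mp this
  · intro p v hp hpv hval
    have hva : v.valuation K (algebraMap (𝓞 K) K a) < 1 := by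
      rw [haK, map_mul, map_pow]
      calc v.valuation K (algebraMap (𝓞 K) K d) ^ m * v.valuation K (b ^ m - 1)
          ≤ 1 * v.valuation K (b ^ m - 1) :=
            mul_le_mul_left (pow_le_one' (v.valuation_le_one (K := K) d) m) _
      _ = v.valuation K (b ^ m - 1) := one_mul _
      _ < 1 := hval
    have hdv : v.asIdeal ∣ Ideal.span {a} := (v.valuation_lt_one_iff_dvd (K := K) a).mp hva
    have hmem : a ∈ v.asIdeal := Ideal.dvd_span_singleton.mp hdv
    have h1 : Ideal.absNorm v.asIdeal ∣ N := by
      simpa using Int.natAbs_dvd_natAbs.mpr (Ideal.absNorm_dvd_norm_of_mem hmem)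
    have h2 : Ideal.absNorm v.asIdeal ∣
        p ^ Fintype.card (Module.Free.ChooseBasisIndex ℤ (𝓞 K)) := by
      have h3 := Ideal.absNorm_dvd_norm_of_mem hpv
      rw [show ((p : ℕ) : 𝓞 K) = algebraMap ℤ (𝓞 K) (p : ℤ) by push_cast; rfl,
        Algebra.norm_algebraMap_of_basis (Module.Free.chooseBasis ℤ (𝓞 K))] at h3
      exact_mod_cast h3
    obtain ⟨j, _, hj⟩ := (Nat.dvd_prime_pow hp).mp h2
    have hj0 : j ≠ 0 := by
      rintro rfl
      rw [pow_zero, Ideal.absNorm_eq_one_iff] at hj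
      exact v.isPrime.ne_top hj
    exact dvd_trans (hj ▸ dvd_pow_self p hj0) h1
theorem small_order_primes_are_rare (K : Type) [Field K] [NumberField K]
    (s : ℕ) (β : Fin s → K) (hβ0 : ∀ i, β i ≠ 0)
    (hβru : ∀ i, ∀ k : ℕ, 0 < k → β i ^ k ≠ 1) :
    ∃ C : ℝ, 0 < C ∧ ∀ x : ℝ, 1 ≤ x →
      (({p : ℕ | p.Prime ∧ (p : ℝ) ≤ x ∧
          ∃ v : HeightOneSpectrum (NumberField.RingOfIntegers K),
            (p : NumberField.RingOfIntegers K) ∈ v.asIdeal ∧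
            ∃ i : Fin s, ∃ m : ℕ, 0 < m ∧ (m : ℝ) < (p : ℝ) ^ ((1 : ℝ) / 4) ∧
              v.valuation K (β i ^ m - 1) < 1}).ncard : ℝ) ≤ C * x ^ ((1 : ℝ) / 2) := by
  have H : ∀ i : Fin s, ∃ k : ℕ, ∀ m : ℕ, 0 < m → ∃ N : ℕ, N ≠ 0 ∧
      N.primeFactors.card ≤ k * m ∧
      ∀ (p : ℕ) (v : HeightOneSpectrum (𝓞 K)), p.Prime → (p : 𝓞 K) ∈ v.asIdeal →
        v.valuation K (β i ^ m - 1) < 1 → p ∣ N :=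
    fun i => key_lemma K (β i) (hβ0 i) (hβru i)
  choose k hk using H
  choose! N hN0 hNcard hNdvd using hk
  set K0 : ℕ := Finset.univ.sup k + 1 with hK0
  refine ⟨(s : ℝ) * (K0 : ℝ) + 1, by positivity, fun x hx => ?_⟩
  set M : ℕ := ⌊x ^ ((1:ℝ)/4)⌋₊ with hM
  set F : Finset ℕ := Finset.univ.biUnion
    (fun i : Fin s => (Finset.Icc 1 M).biUnion (fun m => (N i m).primeFactors)) with hF
  have hsub : {p : ℕ | p.Prime ∧ (p : ℝ) ≤ x ∧
      ∃ v : HeightOneSpectrum (NumberField.RingOfIntegers K),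
        (p : NumberField.RingOfIntegers K) ∈ v.asIdeal ∧
        ∃ i : Fin s, ∃ m : ℕ, 0 < m ∧ (m : ℝ) < (p : ℝ) ^ ((1 : ℝ) / 4) ∧
          v.valuation K (β i ^ m - 1) < 1} ⊆ ↑F := by
    rintro p ⟨hp, hpx, v, hpv, i, m, hm0, hmlt, hval⟩
    have hmM : m ∈ Finset.Icc 1 M := by
      refine Finset.mem_Icc.mpr ⟨hm0, Nat.le_floor ?_⟩
      have h14 : (p:ℝ) ^ ((1:ℝ)/4) ≤ x ^ ((1:ℝ)/4) :=
        Real.rpow_le_rpow (by positivity) hpx (by norm_num)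
      linarith
    simp only [hF, Finset.coe_biUnion, Set.mem_iUnion, Finset.mem_coe]
    exact ⟨i, Finset.mem_univ i, m, hmM,
      Nat.mem_primeFactors.mpr ⟨hp, hNdvd i m hm0 p v hp hpv hval, hN0 i m hm0⟩⟩
  have h1 : (({p : ℕ | p.Prime ∧ (p : ℝ) ≤ x ∧
      ∃ v : HeightOneSpectrum (NumberField.RingOfIntegers K),
        (p : NumberField.RingOfIntegers K) ∈ v.asIdeal ∧
        ∃ i : Fin s, ∃ m : ℕ, 0 < m ∧ (m : ℝ) < (p : ℝ) ^ ((1 : ℝ) / 4) ∧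
          v.valuation K (β i ^ m - 1) < 1}).ncard : ℝ) ≤ (F.card : ℝ) := by
    have h2 := Set.ncard_le_ncard hsub F.finite_toSet
    rw [Set.ncard_coe_finset] at h2
    exact_mod_cast h2
  have hcard : F.card ≤ s * (M * (K0 * M)) := by
    calc F.card ≤ ∑ i : Fin s,
        ((Finset.Icc 1 M).biUnion fun m => (N i m).primeFactors).card :=
          Finset.card_biUnion_le
    _ ≤ ∑ i : Fin s, ∑ m ∈ Finset.Icc 1 M, (N i m).primeFactors.card :=
        Finset.sum_le_sum (fun i _ => Finset.card_biUnion_le)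
    _ ≤ ∑ _i : Fin s, ∑ _m ∈ Finset.Icc 1 M, K0 * M := by
        apply Finset.sum_le_sum; intro i _
        apply Finset.sum_le_sum; intro m hm
        have hm1 : 0 < m := (Finset.mem_Icc.mp hm).1
        have hmM : m ≤ M := (Finset.mem_Icc.mp hm).2
        calc (N i m).primeFactors.card ≤ k i * m := hNcard i m hm1
        _ ≤ K0 * M := Nat.mul_le_mul
            (le_trans (Finset.le_sup (Finset.mem_univ i)) (Nat.le_succ _)) hmM
    _ = s * (M * (K0 * M)) := by
        simp [Finset.sum_const, Nat.card_Icc, smul_eq_mul]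
  have hxpos : (0:ℝ) < x := by linarith
  have hMx : (M:ℝ) ≤ x ^ ((1:ℝ)/4) := Nat.floor_le (by positivity)
  have hx2 : ((M:ℝ)) * M ≤ x ^ ((1:ℝ)/2) := by
    calc (M:ℝ) * M ≤ x ^ ((1:ℝ)/4) * x ^ ((1:ℝ)/4) :=
      mul_le_mul hMx hMx (Nat.cast_nonneg M) (by positivity)
    _ = x ^ ((1:ℝ)/2) := by rw [← Real.rpow_add hxpos]; norm_num
  have hrpow_nonneg : (0:ℝ) ≤ x ^ ((1:ℝ)/2) := Real.rpow_nonneg (le_of_lt hxpos) _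
  calc (({p : ℕ | p.Prime ∧ (p : ℝ) ≤ x ∧
      ∃ v : HeightOneSpectrum (NumberField.RingOfIntegers K),
        (p : NumberField.RingOfIntegers K) ∈ v.asIdeal ∧
        ∃ i : Fin s, ∃ m : ℕ, 0 < m ∧ (m : ℝ) < (p : ℝ) ^ ((1 : ℝ) / 4) ∧
          v.valuation K (β i ^ m - 1) < 1}).ncard : ℝ) ≤ (F.card : ℝ) := h1
  _ ≤ ((s * (M * (K0 * M)) : ℕ) : ℝ) := by exact_mod_cast hcard
  _ = ((s : ℝ) * (K0 : ℝ)) * ((M:ℝ) * M) := by push_cast; ring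
  _ ≤ ((s : ℝ) * (K0 : ℝ)) * (x ^ ((1:ℝ)/2)) :=
      mul_le_mul_of_nonneg_left hx2 (by positivity)
  _ ≤ ((s : ℝ) * (K0 : ℝ) + 1) * x ^ ((1:ℝ)/2) := by nlinarith
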